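/- Let p, q ∈ [1, ∞), let Λ = (λ_i) be a nondecreasing sequence of positive reals with Σ 1/λ_i = ∞, and let f : [0,1] → ℝ be of bounded p-Λ-variation with total p-Λ-variation V(f). Then for every n ≥ 1, ω_q(1/n, f)^q ≤ V(f)^q · (1/n) · max_{1 ≤ k ≤ n} k/(Σ_{i=1}^k 1/λ_i)^{q/p}. -/

import Mathlib

open MeasureTheory

/-- The set of candidate sums defining the p-Λ-variation of `f` on `[0,1]`:
values `(∑ᵢ |f(bᵢ) - f(aᵢ)|^p / λᵢ)^{1/p}` over finite families of
nonoverlapping subintervals `[aᵢ, bᵢ] ⊆ [0,1]`. -/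
def varSet (p : ℝ) (Λ : ℕ → ℝ) (f : ℝ → ℝ) : Set ℝ :=
  {v : ℝ | ∃ (n : ℕ) (a b : Fin n → ℝ),
    (∀ i, 0 ≤ a i ∧ a i ≤ b i ∧ b i ≤ 1) ∧
    (∀ i j, i ≠ j → b i ≤ a j ∨ b j ≤ a i) ∧
    v = (∑ i, |f (b i) - f (a i)| ^ p / Λ (i : ℕ)) ^ (1 / p)}

/-- The p-Λ-variation `V(f)` of `f` on `[0,1]`. -/
noncomputable def pVar (p : ℝ) (Λ : ℕ → ℝ) (f : ℝ → ℝ) : ℝ :=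
  sSup (varSet p Λ f)

/-- `f` belongs to the Waterman–Shiba class `ΛBV^{(p)}` on `[0,1]`. -/
def MemWS (p : ℝ) (Λ : ℕ → ℝ) (f : ℝ → ℝ) : Prop :=
  BddAbove (varSet p Λ f)

/-- The integral modulus of continuity
`ω_q(δ, f) = sup_{0 ≤ γ ≤ δ} (∫₀^{1-γ} |f(t+γ) - f(t)|^q dt)^{1/q}`. -/
noncomputable def omegaq (q : ℝ) (f : ℝ → ℝ) (δ : ℝ) : ℝ :=
  sSup {v : ℝ | ∃ γ : ℝ, 0 ≤ γ ∧ γ ≤ δ ∧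
    v = (∫ t in (0:ℝ)..(1 - γ), |f (t + γ) - f t| ^ q) ^ (1 / q)}

/-- `f` belongs to `H_ω^q`: `f ∈ L^q[0,1]` and `ω_q(δ, f) = O(ω(δ))` as `δ → 0+`. -/
def MemH (q : ℝ) (ω : ℝ → ℝ) (f : ℝ → ℝ) : Prop :=
  MemLp f (ENNReal.ofReal q) (volume.restrict (Set.Icc (0:ℝ) 1)) ∧
  ∃ C : ℝ, ∃ δ₀ : ℝ, 0 < δ₀ ∧ ∀ δ : ℝ, 0 < δ → δ ≤ δ₀ → omegaq q f δ ≤ C * ω δ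


lemma st4_tele (y : ℕ → ℝ) (i : ℕ) : ∀ m, i ≤ m →
    ∑ k ∈ Finset.Ico i m, (y k - y (k+1)) = y i - y m := by
  intro m hm
  induction m, hm using Nat.le_induction with
  | base => simp
  | succ m hm ih => rw [Finset.sum_Ico_succ_top hm, ih]; ring

lemma st4_abel (y w : ℕ → ℝ) (m : ℕ) :
    ∑ k ∈ Finset.range m, (y k - y (k+1)) * (∑ i ∈ Finset.range (k+1), w i)
    = ∑ i ∈ Finset.range m, y i * w i - y m * ∑ i ∈ Finset.range m, w i := by
  induction m with
  | zero => simp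
  | succ m ih =>
    rw [Finset.sum_range_succ, ih, Finset.sum_range_succ (f := fun i => y i * w i),
      Finset.sum_range_succ (f := w)]
    ring

lemma st4_swap (F : ℕ → ℝ) (m : ℕ) :
    ∑ i ∈ Finset.range m, ∑ k ∈ Finset.Ico i m, F k
      = ∑ k ∈ Finset.range m, ((k:ℝ)+1) * F k := by
  induction m with
  | zero => simp
  | succ m ih =>
    have h1 : ∀ i ∈ Finset.range (m+1), ∑ k ∈ Finset.Ico i (m+1), F k
        = ∑ k ∈ Finset.Ico i m, F k + F m := by
      intro i hi
      rw [Finset.sum_Ico_succ_top (Nat.lt_succ_iff.mp (Finset.mem_range.mp hi))]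
    rw [Finset.sum_congr rfl h1, Finset.sum_add_distrib,
      Finset.sum_range_succ (f := fun i => ∑ k ∈ Finset.Ico i m, F k), Finset.Ico_self,
      Finset.sum_empty, add_zero, ih, Finset.sum_const, Finset.card_range,
      Finset.sum_range_succ (f := fun k => ((k:ℝ)+1) * F k)]
    push_cast
    ring

lemma st4_jensen {s : Finset ℕ} {t a : ℕ → ℝ} {r A : ℝ} (hr : 1 ≤ r)
    (ht : ∀ i ∈ s, 0 ≤ t i) (ha : ∀ i ∈ s, 0 ≤ a i)
    (hA : ∑ i ∈ s, t i ≤ A) :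
    (∑ i ∈ s, t i * a i) ^ r ≤ A ^ (r - 1) * ∑ i ∈ s, t i * a i ^ r := by
  have hT0 : 0 ≤ ∑ i ∈ s, t i := Finset.sum_nonneg ht
  rcases eq_or_lt_of_le hT0 with hT | hT
  · have hti : ∀ i ∈ s, t i = 0 := (Finset.sum_eq_zero_iff_of_nonneg ht).mp hT.symm
    have h1 : ∑ i ∈ s, t i * a i = 0 :=
      Finset.sum_eq_zero (fun i hi => by rw [hti i hi, zero_mul])
    have h2 : ∑ i ∈ s, t i * a i ^ r = 0 :=
      Finset.sum_eq_zero (fun i hi => by rw [hti i hi, zero_mul])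
    rw [h1, h2, Real.zero_rpow (by positivity), mul_zero]
  · set T := ∑ i ∈ s, t i with hTdef
    have key := Real.rpow_arith_mean_le_arith_mean_rpow s (fun i => t i / T) a
      (fun i hi => div_nonneg (ht i hi) hT0) (by rw [← Finset.sum_div, ← hTdef]; field_simp) ha hr
    have hs1 : ∑ i ∈ s, (t i / T) * a i = (∑ i ∈ s, t i * a i) / T := by
      rw [Finset.sum_div]; exact Finset.sum_congr rfl fun i _ => by ring
    have hs2 : ∑ i ∈ s, (t i / T) * a i ^ r = (∑ i ∈ s, t i * a i ^ r) / T := by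
      rw [Finset.sum_div]; exact Finset.sum_congr rfl fun i _ => by ring
    rw [hs1, hs2, Real.div_rpow (Finset.sum_nonneg fun i hi => mul_nonneg (ht i hi) (ha i hi))
      hT0] at key
    have hTr : (0:ℝ) < T ^ r := Real.rpow_pos_of_pos hT r
    have h3 : (∑ i ∈ s, t i * a i) ^ r ≤ (∑ i ∈ s, t i * a i ^ r) / T * T ^ r := by
      rw [div_le_iff₀ hTr] at key
      calc (∑ i ∈ s, t i * a i) ^ r = (∑ i ∈ s, t i * a i) ^ r / T ^ r * T ^ r := by
            field_simp
        _ ≤ (∑ i ∈ s, t i * a i ^ r) / T * T ^ r := by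
            apply mul_le_mul_of_nonneg_right _ hTr.le
            rw [div_le_div_iff₀ hTr hT]
            calc (∑ i ∈ s, t i * a i) ^ r * T = T * (∑ i ∈ s, t i * a i) ^ r := by ring
              _ ≤ T * ((∑ i ∈ s, t i * a i ^ r) / T * T ^ r) := by
                  apply mul_le_mul_of_nonneg_left key hT.le
              _ = (∑ i ∈ s, t i * a i ^ r) * T ^ r := by field_simp
    have h4 : (∑ i ∈ s, t i * a i ^ r) / T * T ^ r = T ^ (r-1) * ∑ i ∈ s, t i * a i ^ r := by
      rw [Real.rpow_sub hT, Real.rpow_one]; field_simp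
    have h5 : T ^ (r-1) ≤ A ^ (r-1) := Real.rpow_le_rpow hT0 hA (by linarith)
    have h6 : 0 ≤ ∑ i ∈ s, t i * a i ^ r :=
      Finset.sum_nonneg fun i hi => mul_nonneg (ht i hi) (Real.rpow_nonneg (ha i hi) r)
    calc (∑ i ∈ s, t i * a i) ^ r ≤ T ^ (r-1) * ∑ i ∈ s, t i * a i ^ r := by rw [← h4]; exact h3
      _ ≤ A ^ (r-1) * ∑ i ∈ s, t i * a i ^ r := mul_le_mul_of_nonneg_right h5 h6



open MeasureTheory

lemma st4_core {r : ℝ} (hr : 0 < r) {m : ℕ} (hm : 1 ≤ m) (y w : ℕ → ℝ)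
    (hy0 : ∀ i, 0 ≤ y i) (hyanti : Antitone y) (hym : y m = 0)
    (hw0 : ∀ i, 0 < w i) (hwanti : Antitone w) :
    ∃ k, 1 ≤ k ∧ k ≤ m ∧
      ∑ i ∈ Finset.range m, y i ^ r
        ≤ (∑ i ∈ Finset.range m, y i * w i) ^ r *
            ((k:ℝ) / (∑ i ∈ Finset.range k, w i) ^ r) := by
  have hA0 : 0 ≤ ∑ i ∈ Finset.range m, y i * w i :=
    Finset.sum_nonneg fun i _ => mul_nonneg (hy0 i) (hw0 i).le
  set A := ∑ i ∈ Finset.range m, y i * w i with hAdef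
  have hWpos : ∀ k, 1 ≤ k → 0 < ∑ i ∈ Finset.range k, w i := fun k hk =>
    Finset.sum_pos (fun i _ => hw0 i) ⟨0, Finset.mem_range.mpr hk⟩
  rcases le_or_gt r 1 with hr1 | hr1
  · -- r ≤ 1 : Chebyshev + power mean, take k = m
    refine ⟨m, hm, le_rfl, ?_⟩
    set Wm := ∑ i ∈ Finset.range m, w i with hWm
    have hWmpos : 0 < Wm := hWpos m hm
    have hmono : MonovaryOn y w ↑(Finset.range m) := by
      intro i _ j _ hij
      by_contra hyy
      push_neg at hyy
      have : j ≤ i := by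
        by_contra hji; push_neg at hji
        exact absurd (hwanti hji.le) (not_le.mpr hij)
      exact absurd (hyanti this) (not_le.mpr hyy)
    have cheb := hmono.sum_mul_sum_le_card_mul_sum
    simp only [Finset.card_range] at cheb
    have hSY0 : 0 ≤ ∑ i ∈ Finset.range m, y i := Finset.sum_nonneg fun i _ => hy0 i
    have hm0 : (0:ℝ) < m := by exact_mod_cast hm
    have hsy : ∑ i ∈ Finset.range m, y i ≤ (m:ℝ) * A / Wm := by
      rw [le_div_iff₀ hWmpos]; exact cheb
    have hp1 : (1:ℝ) ≤ 1 / r := by rw [le_div_iff₀ hr]; linarith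
    have key := Real.arith_mean_le_rpow_mean (Finset.range m) (fun _ => (m:ℝ)⁻¹)
      (fun i => y i ^ r) (fun i _ => by positivity)
      (by simp [Finset.sum_const, Finset.card_range]; field_simp)
      (fun i _ => Real.rpow_nonneg (hy0 i) r) hp1
    have e1 : ∀ i ∈ Finset.range m, (m:ℝ)⁻¹ * (y i ^ r) ^ (1/r) = (m:ℝ)⁻¹ * y i := by
      intro i _
      rw [← Real.rpow_mul (hy0 i), mul_one_div, div_self (ne_of_gt hr), Real.rpow_one]
    rw [Finset.sum_congr rfl e1, one_div_one_div] at key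
    -- key : ∑ (m:ℝ)⁻¹ * y i ^ r ≤ (∑ (m:ℝ)⁻¹ * y i) ^ r
    have e2 : ∑ i ∈ Finset.range m, (m:ℝ)⁻¹ * y i ^ r
        = (m:ℝ)⁻¹ * ∑ i ∈ Finset.range m, y i ^ r := by rw [Finset.mul_sum]
    have e3 : ∑ i ∈ Finset.range m, (m:ℝ)⁻¹ * y i
        = (m:ℝ)⁻¹ * ∑ i ∈ Finset.range m, y i := by rw [Finset.mul_sum]
    rw [e2, e3] at key
    have h4 : (m:ℝ)⁻¹ * ∑ i ∈ Finset.range m, y i ≤ A / Wm := by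
      calc (m:ℝ)⁻¹ * ∑ i ∈ Finset.range m, y i ≤ (m:ℝ)⁻¹ * ((m:ℝ) * A / Wm) := by
            exact mul_le_mul_of_nonneg_left hsy (by positivity)
        _ = A / Wm := by field_simp
    have h5 : ((m:ℝ)⁻¹ * ∑ i ∈ Finset.range m, y i) ^ r ≤ (A / Wm) ^ r :=
      Real.rpow_le_rpow (by positivity) h4 hr.le
    have h6 : (A / Wm) ^ r = A ^ r / Wm ^ r := Real.div_rpow hA0 hWmpos.le r
    calc ∑ i ∈ Finset.range m, y i ^ r
        = (m:ℝ) * ((m:ℝ)⁻¹ * ∑ i ∈ Finset.range m, y i ^ r) := by field_simp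
      _ ≤ (m:ℝ) * (A ^ r / Wm ^ r) := by
          apply mul_le_mul_of_nonneg_left _ hm0.le
          calc (m:ℝ)⁻¹ * ∑ i ∈ Finset.range m, y i ^ r
              ≤ ((m:ℝ)⁻¹ * ∑ i ∈ Finset.range m, y i) ^ r := key
            _ ≤ (A / Wm) ^ r := h5
            _ = A ^ r / Wm ^ r := h6
      _ = A ^ r * ((m:ℝ) / Wm ^ r) := by ring
  · -- 1 < r : block decomposition + Jensen
    obtain ⟨k₀, hk₀mem, hk₀max⟩ := Finset.exists_max_image (Finset.Icc 1 m)
      (fun k => (k:ℝ) / (∑ i ∈ Finset.range k, w i) ^ r)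
      ⟨1, Finset.mem_Icc.mpr ⟨le_rfl, hm⟩⟩
    obtain ⟨hk₀1, hk₀m⟩ := Finset.mem_Icc.mp hk₀mem
    refine ⟨k₀, hk₀1, hk₀m, ?_⟩
    set C := (k₀:ℝ) / (∑ i ∈ Finset.range k₀, w i) ^ r with hCdef
    have hC0 : 0 ≤ C :=
      div_nonneg (by positivity) (Real.rpow_nonneg (hWpos k₀ hk₀1).le r)
    set t : ℕ → ℝ := fun k => (y k - y (k+1)) * ∑ i ∈ Finset.range (k+1), w i with htdef
    have ht0 : ∀ k, 0 ≤ t k := fun k =>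
      mul_nonneg (sub_nonneg.mpr (hyanti (Nat.le_succ k))) (hWpos (k+1) (Nat.succ_le_succ (Nat.zero_le k))).le
    have hsumt : ∑ k ∈ Finset.range m, t k = A := by
      rw [htdef]; rw [st4_abel y w m, hym]; ring
    have htel : ∀ i, i < m → y i = ∑ k ∈ Finset.Ico i m, t k * (∑ j ∈ Finset.range (k+1), w j)⁻¹ := by
      intro i him
      have h1 : ∑ k ∈ Finset.Ico i m, t k * (∑ j ∈ Finset.range (k+1), w j)⁻¹
          = ∑ k ∈ Finset.Ico i m, (y k - y (k+1)) := by
        apply Finset.sum_congr rfl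
        intro k _
        have := (hWpos (k+1) (Nat.succ_le_succ (Nat.zero_le k))).ne'
        field_simp [htdef]
        simp only [htdef]; ring
      rw [h1, st4_tele y i m him.le, hym, sub_zero]
    have hjen : ∀ i ∈ Finset.range m, y i ^ r
        ≤ A ^ (r-1) * ∑ k ∈ Finset.Ico i m, t k * ((∑ j ∈ Finset.range (k+1), w j)⁻¹) ^ r := by
      intro i hi
      rw [htel i (Finset.mem_range.mp hi)]
      apply st4_jensen hr1.le (fun k _ => ht0 k)
        (fun k _ => inv_nonneg.mpr (hWpos (k+1) (Nat.succ_le_succ (Nat.zero_le k))).le)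
      calc ∑ k ∈ Finset.Ico i m, t k ≤ ∑ k ∈ Finset.range m, t k := by
            apply Finset.sum_le_sum_of_subset_of_nonneg
            · rw [Finset.range_eq_Ico]; exact Finset.Ico_subset_Ico (Nat.zero_le i) le_rfl
            · intro k _ _; exact ht0 k
        _ = A := hsumt
    have hsum1 : ∑ i ∈ Finset.range m, y i ^ r
        ≤ A ^ (r-1) * ∑ i ∈ Finset.range m,
            ∑ k ∈ Finset.Ico i m, t k * ((∑ j ∈ Finset.range (k+1), w j)⁻¹) ^ r := by
      rw [Finset.mul_sum]
      exact Finset.sum_le_sum hjen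
    rw [st4_swap (fun k => t k * ((∑ j ∈ Finset.range (k+1), w j)⁻¹) ^ r) m] at hsum1
    have hinner : ∑ k ∈ Finset.range m, ((k:ℝ)+1) * (t k * ((∑ j ∈ Finset.range (k+1), w j)⁻¹) ^ r)
        ≤ A * C := by
      calc ∑ k ∈ Finset.range m, ((k:ℝ)+1) * (t k * ((∑ j ∈ Finset.range (k+1), w j)⁻¹) ^ r)
          ≤ ∑ k ∈ Finset.range m, t k * C := by
            apply Finset.sum_le_sum
            intro k hk
            have hWk := hWpos (k+1) (Nat.succ_le_succ (Nat.zero_le k))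
            have hφ : ((k:ℝ)+1) * ((∑ j ∈ Finset.range (k+1), w j)⁻¹) ^ r ≤ C := by
              have := hk₀max (k+1) (Finset.mem_Icc.mpr
                ⟨Nat.succ_le_succ (Nat.zero_le k), Nat.succ_le_of_lt (Finset.mem_range.mp hk)⟩)
              rw [Real.inv_rpow hWk.le]
              calc ((k:ℝ)+1) * ((∑ j ∈ Finset.range (k+1), w j) ^ r)⁻¹
                  = ((k+1:ℕ):ℝ) / (∑ j ∈ Finset.range (k+1), w j) ^ r := by
                    push_cast; rw [div_eq_mul_inv]
                _ ≤ C := this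
            calc ((k:ℝ)+1) * (t k * ((∑ j ∈ Finset.range (k+1), w j)⁻¹) ^ r)
                = t k * (((k:ℝ)+1) * ((∑ j ∈ Finset.range (k+1), w j)⁻¹) ^ r) := by ring
              _ ≤ t k * C := mul_le_mul_of_nonneg_left hφ (ht0 k)
        _ = A * C := by rw [← Finset.sum_mul, hsumt]
    have hfin : A ^ (r-1) * (A * C) = A ^ r * C := by
      rcases eq_or_lt_of_le hA0 with h0 | h0
      · rw [← h0, Real.zero_rpow (by linarith), Real.zero_rpow (ne_of_gt hr)]; ring
      · have e : A ^ (r-1) * A = A ^ r := by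
          nth_rewrite 2 [← Real.rpow_one A]
          rw [← Real.rpow_add h0]
          norm_num
        rw [← mul_assoc, e]
    calc ∑ i ∈ Finset.range m, y i ^ r
        ≤ A ^ (r-1) * ∑ k ∈ Finset.range m, ((k:ℝ)+1) * (t k * ((∑ j ∈ Finset.range (k+1), w j)⁻¹) ^ r) := hsum1
      _ ≤ A ^ (r-1) * (A * C) := by
          apply mul_le_mul_of_nonneg_left hinner (Real.rpow_nonneg hA0 _)
      _ = A ^ r * C := hfin

lemma st4_mem0 (p : ℝ) (Λ : ℕ → ℝ) (f : ℝ → ℝ) (hp : p ≠ 0) : (0:ℝ) ∈ varSet p Λ f := by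
  refine ⟨0, Fin.elim0, Fin.elim0, fun i => i.elim0, fun i => i.elim0, ?_⟩
  rw [Finset.univ_eq_empty, Finset.sum_empty, Real.zero_rpow (one_div_ne_zero hp)]

lemma st4_var_bound (p q : ℝ) (hp : 1 ≤ p) (hq : 1 ≤ q)
    (Λ : ℕ → ℝ) (hΛpos : ∀ i, 0 < Λ i) (hΛmono : Monotone Λ)
    (f : ℝ → ℝ) (hf : MemWS p Λ f) {γ s : ℝ} (hγ : 0 < γ) (hs : 0 ≤ s)
    {m : ℕ} (hm : 1 ≤ m) (hend : ∀ j : ℕ, j < m → s + (j:ℝ) * γ ≤ 1 - γ) :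
    ∃ k, 1 ≤ k ∧ k ≤ m ∧
      ∑ j ∈ Finset.range m, |f (s + (j:ℝ)*γ + γ) - f (s + (j:ℝ)*γ)| ^ q
        ≤ (pVar p Λ f) ^ q * ((k:ℝ) / (∑ i ∈ Finset.range k, 1 / Λ i) ^ (q/p)) := by
  have hp0 : (0:ℝ) < p := lt_of_lt_of_le one_pos hp
  have hq0 : (0:ℝ) < q := lt_of_lt_of_le one_pos hq
  have hr0 : 0 < q / p := div_pos hq0 hp0
  set x : Fin m → ℝ := fun j => |f (s + ((j:ℕ):ℝ)*γ + γ) - f (s + ((j:ℕ):ℝ)*γ)| with hx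
  set τ := Tuple.sort (fun i => -x i) with hτ
  have hXanti : ∀ i j : Fin m, i ≤ j → x (τ j) ≤ x (τ i) := by
    intro i j hij
    have := Tuple.monotone_sort (fun i => -x i) hij
    simpa [hτ] using this
  have hV0 : 0 ≤ pVar p Λ f := le_csSup hf (st4_mem0 p Λ f (ne_of_gt hp0))
  have hmem : (∑ i : Fin m, x (τ i) ^ p / Λ (i:ℕ)) ^ (1/p) ∈ varSet p Λ f := by
    refine ⟨m, fun i => s + ((τ i : ℕ):ℝ)*γ, fun i => s + ((τ i : ℕ):ℝ)*γ + γ, ?_, ?_, rfl⟩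
    · intro i
      refine ⟨?_, ?_, ?_⟩
      · dsimp only; positivity
      · dsimp only; linarith
      · dsimp only
        have := hend (τ i) (τ i).isLt
        linarith
    · intro i j hij
      have hne : ((τ i : ℕ)) ≠ ((τ j : ℕ)) := by
        intro hcon
        exact hij (τ.injective (Fin.ext hcon))
      rcases lt_or_gt_of_ne hne with hlt | hlt
      · left
        have h1 : ((τ i : ℕ):ℝ) + 1 ≤ ((τ j : ℕ):ℝ) := by exact_mod_cast hlt
        dsimp only; nlinarith
      · right
        have h1 : ((τ j : ℕ):ℝ) + 1 ≤ ((τ i : ℕ):ℝ) := by exact_mod_cast hlt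
        dsimp only; nlinarith
  have hsum0 : 0 ≤ ∑ i : Fin m, x (τ i) ^ p / Λ (i:ℕ) :=
    Finset.sum_nonneg fun i _ => div_nonneg (Real.rpow_nonneg (abs_nonneg _) p) (hΛpos _).le
  have hle : ∑ i : Fin m, x (τ i) ^ p / Λ (i:ℕ) ≤ (pVar p Λ f) ^ p := by
    have h1 : (∑ i : Fin m, x (τ i) ^ p / Λ (i:ℕ)) ^ (1/p) ≤ pVar p Λ f := le_csSup hf hmem
    have h2 : ((∑ i : Fin m, x (τ i) ^ p / Λ (i:ℕ)) ^ (1/p)) ^ p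
        = ∑ i : Fin m, x (τ i) ^ p / Λ (i:ℕ) := by
      rw [← Real.rpow_mul hsum0, one_div_mul_cancel (ne_of_gt hp0), Real.rpow_one]
    calc ∑ i : Fin m, x (τ i) ^ p / Λ (i:ℕ)
        = ((∑ i : Fin m, x (τ i) ^ p / Λ (i:ℕ)) ^ (1/p)) ^ p := h2.symm
      _ ≤ (pVar p Λ f) ^ p := Real.rpow_le_rpow (Real.rpow_nonneg hsum0 _) h1 hp0.le
  set y : ℕ → ℝ := fun i => if h : i < m then x (τ ⟨i, h⟩) ^ p else 0 with hy
  have hy0 : ∀ i, 0 ≤ y i := by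
    intro i; rw [hy]; dsimp only; split
    · exact Real.rpow_nonneg (abs_nonneg _) p
    · exact le_rfl
  have hyanti : Antitone y := by
    intro i j hij
    rw [hy]; dsimp only
    by_cases hjm : j < m
    · have him : i < m := lt_of_le_of_lt hij hjm
      rw [dif_pos hjm, dif_pos him]
      exact Real.rpow_le_rpow (abs_nonneg _) (hXanti ⟨i,him⟩ ⟨j,hjm⟩ hij) hp0.le
    · rw [dif_neg hjm]; split
      · exact Real.rpow_nonneg (abs_nonneg _) p
      · exact le_rfl
  have hym : y m = 0 := by rw [hy]; dsimp only; rw [dif_neg (lt_irrefl m)]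
  have hw0 : ∀ i, 0 < 1 / Λ i := fun i => one_div_pos.mpr (hΛpos i)
  have hwanti : Antitone (fun i => 1 / Λ i) := fun i j hij =>
    one_div_le_one_div_of_le (hΛpos i) (hΛmono hij)
  have hAe : ∑ i ∈ Finset.range m, y i * (1 / Λ i) = ∑ i : Fin m, x (τ i) ^ p / Λ (i:ℕ) := by
    rw [← Fin.sum_univ_eq_sum_range (fun i => y i * (1 / Λ i)) m]
    apply Finset.sum_congr rfl
    intro i _
    rw [hy]; dsimp only; rw [dif_pos i.isLt]
    simp [Fin.eta, mul_one_div, div_eq_mul_inv]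
  obtain ⟨k, hk1, hkm, hcore⟩ := st4_core hr0 hm y (fun i => 1/Λ i) hy0 hyanti hym hw0 hwanti
  refine ⟨k, hk1, hkm, ?_⟩
  have hsq : ∑ j ∈ Finset.range m, |f (s + (j:ℝ)*γ + γ) - f (s + (j:ℝ)*γ)| ^ q
      = ∑ i ∈ Finset.range m, y i ^ (q/p) := by
    rw [← Fin.sum_univ_eq_sum_range (fun j => |f (s + (j:ℝ)*γ + γ) - f (s + (j:ℝ)*γ)| ^ q) m,
      ← Fin.sum_univ_eq_sum_range (fun i => y i ^ (q/p)) m]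
    calc ∑ i : Fin m, |f (s + ((i:ℕ):ℝ)*γ + γ) - f (s + ((i:ℕ):ℝ)*γ)| ^ q
        = ∑ i : Fin m, x (τ i) ^ q := (Equiv.sum_comp τ (fun i => x i ^ q)).symm
      _ = ∑ i : Fin m, y (i:ℕ) ^ (q/p) := by
          apply Finset.sum_congr rfl
          intro i _
          rw [hy]; dsimp only
          rw [dif_pos i.isLt, ← Real.rpow_mul (abs_nonneg _),
            show p * (q/p) = q by field_simp]
  rw [hsq]
  have hdiv0 : 0 ≤ (k:ℝ) / (∑ i ∈ Finset.range k, 1/Λ i) ^ (q/p) :=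
    div_nonneg (by positivity) (Real.rpow_nonneg (Finset.sum_nonneg fun i _ => (hw0 i).le) _)
  calc ∑ i ∈ Finset.range m, y i ^ (q/p)
      ≤ (∑ i ∈ Finset.range m, y i * (1/Λ i)) ^ (q/p) *
          ((k:ℝ) / (∑ i ∈ Finset.range k, 1/Λ i) ^ (q/p)) := hcore
    _ ≤ ((pVar p Λ f) ^ p) ^ (q/p) * ((k:ℝ) / (∑ i ∈ Finset.range k, 1/Λ i) ^ (q/p)) := by
        apply mul_le_mul_of_nonneg_right _ hdiv0
        apply Real.rpow_le_rpow _ _ hr0.le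
        · rw [hAe]; exact hsum0
        · rw [hAe]; exact hle
    _ = (pVar p Λ f) ^ q * ((k:ℝ) / (∑ i ∈ Finset.range k, 1/Λ i) ^ (q/p)) := by
        rw [← Real.rpow_mul hV0]
        congr 2
        field_simp


set_option maxHeartbeats 2000000 in
/-- For `p, q ≥ 1`, `Λ` nondecreasing positive with `∑ 1/λᵢ = ∞`, and
`f ∈ ΛBV^{(p)}` on `[0,1]`, for every `n ≥ 1`:
`ω_q(1/n, f)^q ≤ V(f)^q · (1/n) · max_{1 ≤ k ≤ n} k/(∑_{i=1}^k 1/λᵢ)^{q/p}`. -/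
theorem stmt4 (p q : ℝ) (hp : 1 ≤ p) (hq : 1 ≤ q)
    (Λ : ℕ → ℝ) (hΛpos : ∀ i, 0 < Λ i) (hΛmono : Monotone Λ)
    (hΛdiv : Filter.Tendsto (fun n => ∑ i ∈ Finset.range n, 1 / Λ i) Filter.atTop Filter.atTop)
    (f : ℝ → ℝ) (hf : MemWS p Λ f) (n : ℕ) (hn : 1 ≤ n) :
    omegaq q f (1 / n) ^ q ≤
      (pVar p Λ f) ^ q * (1 / n) *
        sSup {v : ℝ | ∃ k : ℕ, 1 ≤ k ∧ k ≤ n ∧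
          v = (k : ℝ) / (∑ i ∈ Finset.range k, 1 / Λ i) ^ (q / p)} := by
  have hp0 : (0:ℝ) < p := lt_of_lt_of_le one_pos hp
  have hq0 : (0:ℝ) < q := lt_of_lt_of_le one_pos hq
  have hn0 : (0:ℝ) < (n:ℝ) := by exact_mod_cast hn
  have hV0 : 0 ≤ pVar p Λ f := le_csSup hf (st4_mem0 p Λ f (ne_of_gt hp0))
  have hSCbdd : BddAbove {v : ℝ | ∃ k : ℕ, 1 ≤ k ∧ k ≤ n ∧
      v = (k : ℝ) / (∑ i ∈ Finset.range k, 1 / Λ i) ^ (q / p)} := by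
    apply BddAbove.mono _ ((Finset.Icc 1 n).image
      (fun k : ℕ => (k:ℝ) / (∑ i ∈ Finset.range k, 1 / Λ i) ^ (q/p))).bddAbove
    rintro v ⟨k, h1, h2, rfl⟩
    simp only [Finset.coe_image, Set.mem_image, Finset.mem_coe, Finset.mem_Icc]
    exact ⟨k, ⟨h1, h2⟩, rfl⟩
  set C := sSup {v : ℝ | ∃ k : ℕ, 1 ≤ k ∧ k ≤ n ∧
      v = (k : ℝ) / (∑ i ∈ Finset.range k, 1 / Λ i) ^ (q / p)} with hC
  have hCmem : ∀ k : ℕ, 1 ≤ k → k ≤ n →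
      (k:ℝ) / (∑ i ∈ Finset.range k, 1 / Λ i) ^ (q/p) ≤ C := fun k h1 h2 =>
    le_csSup hSCbdd ⟨k, h1, h2, rfl⟩
  have hwsum0 : ∀ k : ℕ, 0 ≤ ∑ i ∈ Finset.range k, 1 / Λ i := fun k =>
    Finset.sum_nonneg fun i _ => (one_div_pos.mpr (hΛpos i)).le
  have hC0 : 0 ≤ C :=
    le_trans (div_nonneg (by norm_num) (Real.rpow_nonneg (hwsum0 1) _)) (hCmem 1 le_rfl hn)
  set B := pVar p Λ f ^ q * (1 / (n:ℝ)) * C with hB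
  have hB0 : 0 ≤ B := mul_nonneg (mul_nonneg (Real.rpow_nonneg hV0 q) (by positivity)) hC0
  have hn1 : 1 / (n:ℝ) ≤ 1 := by rw [div_le_one hn0]; exact_mod_cast hn
  have hkey : ∀ γ : ℝ, 0 ≤ γ → γ ≤ 1/(n:ℝ) →
      (∫ t in (0:ℝ)..(1 - γ), |f (t + γ) - f t| ^ q) ≤ B := by
    intro γ hγ0 hγn
    rcases eq_or_lt_of_le hγ0 with hγ | hγ
    · have hzero : ∀ t ∈ Set.uIcc (0:ℝ) (1-γ), |f (t + γ) - f t| ^ q = (0:ℝ) := by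
        intro t _
        rw [← hγ, add_zero, sub_self, abs_zero, Real.zero_rpow (ne_of_gt hq0)]
      calc (∫ t in (0:ℝ)..(1-γ), |f (t + γ) - f t| ^ q)
          = ∫ _ in (0:ℝ)..(1-γ), (0:ℝ) := intervalIntegral.integral_congr hzero
        _ = 0 := by simp
        _ ≤ B := hB0
    · set g : ℝ → ℝ := fun t => |f (t + γ) - f t| ^ q with hg
      have hg0 : ∀ t, 0 ≤ g t := fun t => Real.rpow_nonneg (abs_nonneg _) q
      have h1γ : (0:ℝ) ≤ 1 - γ := by linarith [le_trans hγn hn1]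
      by_cases hInt : IntervalIntegrable g volume 0 (1-γ)
      swap
      · rw [intervalIntegral.integral_undef hInt]; exact hB0
      have hγn' : γ * (n:ℝ) ≤ 1 := by
        calc γ * (n:ℝ) ≤ (1/(n:ℝ)) * (n:ℝ) := mul_le_mul_of_nonneg_right hγn hn0.le
          _ = 1 := by field_simp
      set M : ℕ := ⌈1/γ⌉₊ with hM
      have hMγ : (1:ℝ) ≤ (M:ℝ) * γ := by
        calc (1:ℝ) = (1/γ) * γ := by field_simp
          _ ≤ (M:ℝ) * γ := mul_le_mul_of_nonneg_right (Nat.le_ceil _) hγ.le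
      set c : ℕ → ℝ := fun j => min ((j:ℝ)*γ) (1-γ) with hc
      have hc0 : c 0 = 0 := by simp [hc, h1γ]
      have hcM : c M = 1 - γ := by
        rw [hc]; dsimp only; exact min_eq_right (by linarith)
      have hcmem : ∀ j : ℕ, 0 ≤ c j ∧ c j ≤ 1-γ := fun j =>
        ⟨le_min (by positivity) h1γ, min_le_right _ _⟩
      have hpieceInt : ∀ j : ℕ, IntervalIntegrable g volume (c j) (c (j+1)) := by
        intro j
        apply hInt.mono_set
        apply Set.uIcc_subset_uIcc <;> rw [Set.uIcc_of_le h1γ] <;>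
          exact Set.mem_Icc.mpr ⟨(hcmem _).1, (hcmem _).2⟩
      have hsplit : (∫ t in (0:ℝ)..(1-γ), g t)
          = ∑ j ∈ Finset.range M, ∫ t in (c j)..(c (j+1)), g t := by
        rw [intervalIntegral.sum_integral_adjacent_intervals (fun k _ => hpieceInt k), hc0, hcM]
      set H : ℕ → ℝ → ℝ := fun j u => if u + (j:ℝ)*γ ≤ 1 - γ then g (u + (j:ℝ)*γ) else 0 with hH
      have hH0 : ∀ j u, 0 ≤ H j u := by
        intro j u; rw [hH]; dsimp only; split
        · exact hg0 _
        · exact le_rfl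
      have hHInt : ∀ j : ℕ, IntervalIntegrable (H j) volume 0 γ := by
        intro j
        have hHind : H j = (Set.Iic (1 - γ - (j:ℝ)*γ)).indicator (fun u => g (u + (j:ℝ)*γ)) := by
          funext u
          rw [hH]; dsimp only
          by_cases hcond : u + (j:ℝ)*γ ≤ 1-γ
          · rw [if_pos hcond, Set.indicator_of_mem (by simp only [Set.mem_Iic]; linarith)]
          · rw [if_neg hcond,
              Set.indicator_of_notMem (by simp only [Set.mem_Iic, not_le]; push_neg at hcond; linarith)]
        rw [hHind, intervalIntegrable_iff_integrableOn_Ioc_of_le hγ.le,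
          MeasureTheory.IntegrableOn, MeasureTheory.integrable_indicator_iff measurableSet_Iic,
          MeasureTheory.IntegrableOn, MeasureTheory.Measure.restrict_restrict measurableSet_Iic]
        rcases lt_or_ge (1 - γ - (j:ℝ)*γ) 0 with hd | hd
        · have hemp : Set.Iic (1-γ-(j:ℝ)*γ) ∩ Set.Ioc 0 γ = ∅ := by
            apply Set.eq_empty_iff_forall_notMem.mpr
            intro u hu
            obtain ⟨h1, h2, h3⟩ := hu
            simp only [Set.mem_Iic] at h1
            linarith
          rw [hemp]
          exact MeasureTheory.integrableOn_empty
        · set l := min γ (1 - γ - (j:ℝ)*γ) with hl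
          have hl0 : 0 ≤ l := le_min hγ.le hd
          have hsub : Set.Iic (1-γ-(j:ℝ)*γ) ∩ Set.Ioc 0 γ ⊆ Set.Ioc 0 l := by
            rintro u ⟨h1, h2, h3⟩
            simp only [Set.mem_Iic] at h1
            exact ⟨h2, le_min h3 h1⟩
          apply MeasureTheory.IntegrableOn.mono_set _ hsub
          rw [← intervalIntegrable_iff_integrableOn_Ioc_of_le hl0]
          have hgj : IntervalIntegrable g volume ((j:ℝ)*γ) (l + (j:ℝ)*γ) := by
            apply hInt.mono_set
            apply Set.uIcc_subset_uIcc <;> rw [Set.uIcc_of_le h1γ]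
            · refine Set.mem_Icc.mpr ⟨by positivity, by linarith⟩
            · refine Set.mem_Icc.mpr ⟨by positivity, ?_⟩
              have hll : l ≤ 1 - γ - (j:ℝ)*γ := min_le_right _ _
              linarith
          have hres := hgj.comp_add_right ((j:ℝ)*γ)
          simpa using hres
      have hpiece : ∀ j : ℕ, (∫ t in (c j)..(c (j+1)), g t) ≤ ∫ u in (0:ℝ)..γ, H j u := by
        intro j
        rcases lt_or_ge (1-γ) ((j:ℝ)*γ) with hj | hj
        · have e1 : c j = 1-γ := min_eq_right hj.le
          have e2 : c (j+1) = 1-γ := by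
            rw [hc]; dsimp only
            apply min_eq_right
            push_cast
            nlinarith
          rw [e1, e2, intervalIntegral.integral_same]
          exact intervalIntegral.integral_nonneg hγ.le (fun u _ => hH0 j u)
        · have e1 : c j = (j:ℝ)*γ := min_eq_left hj
          set l := c (j+1) - (j:ℝ)*γ with hl
          have hjj1 : (j:ℝ)*γ ≤ c (j+1) := by
            rw [hc]; dsimp only
            apply le_min _ hj
            push_cast
            nlinarith
          have hl0 : 0 ≤ l := by rw [hl]; linarith
          have hlγ : l ≤ γ := by
            have h2 : c (j+1) ≤ ((j:ℝ)+1)*γ := by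
              rw [hc]; dsimp only
              refine le_trans (min_le_left _ _) ?_
              push_cast
              linarith
            rw [hl]; nlinarith
          have hcd : c (j+1) ≤ 1-γ := (hcmem (j+1)).2
          have key : (∫ t in (c j)..(c (j+1)), g t) = ∫ u in (0:ℝ)..l, H j u := by
            have t1 := intervalIntegral.integral_comp_add_right (a := 0) (b := l) g ((j:ℝ)*γ)
            have e3 : (0:ℝ) + (j:ℝ)*γ = (j:ℝ)*γ := zero_add _
            have e4 : l + (j:ℝ)*γ = c (j+1) := by rw [hl]; ring
            rw [e3, e4] at t1
            have t2 : ∀ u ∈ Set.uIcc (0:ℝ) l, H j u = g (u + (j:ℝ)*γ) := by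
              intro u hu
              rw [Set.uIcc_of_le hl0] at hu
              obtain ⟨hu0, hul⟩ := Set.mem_Icc.mp hu
              rw [hH]; dsimp only
              rw [if_pos (by rw [hl] at hul; linarith)]
            rw [e1, ← t1]
            exact (intervalIntegral.integral_congr t2).symm
          rw [key]
          have hmeml : l ∈ Set.uIcc (0:ℝ) γ := by
            rw [Set.uIcc_of_le hγ.le]; exact Set.mem_Icc.mpr ⟨hl0, hlγ⟩
          have i1 : IntervalIntegrable (H j) volume 0 l :=
            (hHInt j).mono_set (Set.uIcc_subset_uIcc Set.left_mem_uIcc hmeml)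
          have i2 : IntervalIntegrable (H j) volume l γ :=
            (hHInt j).mono_set (Set.uIcc_subset_uIcc hmeml Set.right_mem_uIcc)
          have hadd := intervalIntegral.integral_add_adjacent_intervals i1 i2
          have hpos : 0 ≤ ∫ u in l..γ, H j u :=
            intervalIntegral.integral_nonneg hlγ (fun u _ => hH0 j u)
          linarith
      have hpt : ∀ u ∈ Set.Icc (0:ℝ) γ, (∑ j ∈ Finset.range M, H j u) ≤ B / γ := by
        intro u hu
        obtain ⟨hu0, huγ⟩ := hu
        have hD0 : 0 ≤ B / γ := div_nonneg hB0 hγ.le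
        have hfilt : ∑ j ∈ Finset.range M, H j u
            = ∑ j ∈ (Finset.range M).filter (fun j : ℕ => u + (j:ℝ)*γ ≤ 1-γ), g (u + (j:ℝ)*γ) := by
          rw [Finset.sum_filter]
        rw [hfilt]
        rcases lt_or_ge ((1 - γ - u)/γ) 0 with hz | hz
        · have hemp : (Finset.range M).filter (fun j : ℕ => u + (j:ℝ)*γ ≤ 1-γ) = ∅ := by
            apply Finset.filter_eq_empty_iff.mpr
            intro j _
            have h1 : 1 - γ - u < 0 := by
              by_contra hcon
              push_neg at hcon
              exact absurd (div_nonneg hcon hγ.le) (not_le.mpr hz)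
            simp only [not_le]
            have h2 : 0 ≤ (j:ℝ)*γ := by positivity
            linarith
          rw [hemp, Finset.sum_empty]
          exact hD0
        · set K := ⌊(1-γ-u)/γ⌋₊ with hK
          have hcond : ∀ j : ℕ, (u + (j:ℝ)*γ ≤ 1-γ) ↔ j ≤ K := by
            intro j
            rw [hK, Nat.le_floor_iff hz, le_div_iff₀ hγ]
            constructor <;> intro h <;> linarith
          have hfeq : (Finset.range M).filter (fun j : ℕ => u + (j:ℝ)*γ ≤ 1-γ)
              = Finset.range (min M (K+1)) := by
            ext j
            simp only [Finset.mem_filter, Finset.mem_range, hcond j, lt_min_iff]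
            omega
          rw [hfeq]
          rcases Nat.eq_zero_or_pos (min M (K+1)) with hm0 | hm1
          · rw [hm0, Finset.range_zero, Finset.sum_empty]
            exact hD0
          · set m := min M (K+1) with hm
            have hend : ∀ j : ℕ, j < m → u + (j:ℝ)*γ ≤ 1-γ := by
              intro j hj
              apply (hcond j).mpr
              omega
            have hmγ : (m:ℝ)*γ ≤ 1 := by
              have h1 := hend (m-1) (by omega)
              have h2 : ((m-1:ℕ):ℝ) = (m:ℝ) - 1 := by
                have h3 : 1 ≤ m := hm1
                push_cast [h3]
                ring
              rw [h2] at h1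
              nlinarith
            obtain ⟨k, hk1, hkm, hkey2⟩ := st4_var_bound p q hp hq Λ hΛpos hΛmono f hf hγ hu0 hm1 hend
            refine le_trans hkey2 ?_
            have hkγ : (k:ℝ)*γ ≤ 1 := by
              have hkm' : (k:ℝ) ≤ (m:ℝ) := by exact_mod_cast hkm
              nlinarith
            have hVq0 : 0 ≤ pVar p Λ f ^ q := Real.rpow_nonneg hV0 q
            rw [le_div_iff₀ hγ]
            rcases le_or_gt k n with hkn | hnk
            · have h1 : (k:ℝ)/(∑ i ∈ Finset.range k, 1/Λ i)^(q/p) ≤ C := hCmem k hk1 hkn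
              calc pVar p Λ f ^ q * ((k:ℝ)/(∑ i ∈ Finset.range k, 1/Λ i)^(q/p)) * γ
                  ≤ pVar p Λ f ^ q * C * γ :=
                    mul_le_mul_of_nonneg_right (mul_le_mul_of_nonneg_left h1 hVq0) hγ.le
                _ ≤ pVar p Λ f ^ q * C * (1/(n:ℝ)) :=
                    mul_le_mul_of_nonneg_left hγn (mul_nonneg hVq0 hC0)
                _ = B := by rw [hB]; ring
            · have hWn : 0 < (∑ i ∈ Finset.range n, 1/Λ i) :=
                Finset.sum_pos (fun i _ => one_div_pos.mpr (hΛpos i)) ⟨0, Finset.mem_range.mpr hn⟩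
              have hWk : 0 < (∑ i ∈ Finset.range k, 1/Λ i) :=
                Finset.sum_pos (fun i _ => one_div_pos.mpr (hΛpos i)) ⟨0, Finset.mem_range.mpr hk1⟩
              have hWnk : (∑ i ∈ Finset.range n, 1/Λ i) ≤ (∑ i ∈ Finset.range k, 1/Λ i) := by
                apply Finset.sum_le_sum_of_subset_of_nonneg
                · exact Finset.range_subset_range.mpr (le_of_lt hnk)
                · intro i _ _; exact (one_div_pos.mpr (hΛpos i)).le
              have hWr : (∑ i ∈ Finset.range n, 1/Λ i)^(q/p)
                  ≤ (∑ i ∈ Finset.range k, 1/Λ i)^(q/p) :=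
                Real.rpow_le_rpow hWn.le hWnk (by positivity)
              have hWnr : 0 < (∑ i ∈ Finset.range n, 1/Λ i)^(q/p) := Real.rpow_pos_of_pos hWn _
              have hCn : (n:ℝ)/(∑ i ∈ Finset.range n, 1/Λ i)^(q/p) ≤ C := hCmem n hn le_rfl
              have hd1 : (k:ℝ)/(∑ i ∈ Finset.range k, 1/Λ i)^(q/p)
                  ≤ (k:ℝ)/(∑ i ∈ Finset.range n, 1/Λ i)^(q/p) :=
                div_le_div_of_nonneg_left (by positivity) hWnr hWr
              have hstep : (k:ℝ)/(∑ i ∈ Finset.range n, 1/Λ i)^(q/p) * γ ≤ (1/(n:ℝ)) * C := by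
                have h1 : (k:ℝ)*γ/(∑ i ∈ Finset.range n, 1/Λ i)^(q/p)
                    ≤ 1/(∑ i ∈ Finset.range n, 1/Λ i)^(q/p) := by gcongr
                have h2 : 1/(∑ i ∈ Finset.range n, 1/Λ i)^(q/p) ≤ (1/(n:ℝ)) * C := by
                  have h3 : (1/(n:ℝ)) * ((n:ℝ)/(∑ i ∈ Finset.range n, 1/Λ i)^(q/p))
                      ≤ (1/(n:ℝ)) * C := mul_le_mul_of_nonneg_left hCn (by positivity)
                  calc 1/(∑ i ∈ Finset.range n, 1/Λ i)^(q/p)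
                      = (1/(n:ℝ)) * ((n:ℝ)/(∑ i ∈ Finset.range n, 1/Λ i)^(q/p)) := by
                        field_simp
                    _ ≤ (1/(n:ℝ)) * C := h3
                calc (k:ℝ)/(∑ i ∈ Finset.range n, 1/Λ i)^(q/p) * γ
                    = (k:ℝ)*γ/(∑ i ∈ Finset.range n, 1/Λ i)^(q/p) := by ring
                  _ ≤ 1/(∑ i ∈ Finset.range n, 1/Λ i)^(q/p) := h1
                  _ ≤ (1/(n:ℝ)) * C := h2
              calc pVar p Λ f ^ q * ((k:ℝ)/(∑ i ∈ Finset.range k, 1/Λ i)^(q/p)) * γ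
                  ≤ pVar p Λ f ^ q * ((k:ℝ)/(∑ i ∈ Finset.range n, 1/Λ i)^(q/p)) * γ :=
                    mul_le_mul_of_nonneg_right (mul_le_mul_of_nonneg_left hd1 hVq0) hγ.le
                _ = pVar p Λ f ^ q * ((k:ℝ)/(∑ i ∈ Finset.range n, 1/Λ i)^(q/p) * γ) := by ring
                _ ≤ pVar p Λ f ^ q * ((1/(n:ℝ)) * C) := mul_le_mul_of_nonneg_left hstep hVq0
                _ = B := by rw [hB]; ring
      have hsumII : IntervalIntegrable (fun u => ∑ j ∈ Finset.range M, H j u) volume 0 γ := by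
        have hs2 := IntervalIntegrable.sum (μ := volume) (a := (0:ℝ)) (b := γ)
          (Finset.range M) (f := H) (fun j _ => hHInt j)
        rwa [Finset.sum_fn] at hs2
      have hmono2 := intervalIntegral.integral_mono_on hγ.le hsumII
        (intervalIntegrable_const (c := B/γ)) hpt
      calc (∫ t in (0:ℝ)..(1-γ), g t)
          = ∑ j ∈ Finset.range M, ∫ t in (c j)..(c (j+1)), g t := hsplit
        _ ≤ ∑ j ∈ Finset.range M, ∫ u in (0:ℝ)..γ, H j u :=
            Finset.sum_le_sum (fun j _ => hpiece j)
        _ = ∫ u in (0:ℝ)..γ, ∑ j ∈ Finset.range M, H j u :=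
            (intervalIntegral.integral_finset_sum (fun j _ => hHInt j)).symm
        _ ≤ ∫ _ in (0:ℝ)..γ, B/γ := hmono2
        _ = (γ - 0) • (B/γ) := intervalIntegral.integral_const _
        _ = B := by rw [smul_eq_mul]; field_simp; ring
  have hub : omegaq q f (1/(n:ℝ)) ≤ B ^ (1/q) := by
    unfold omegaq
    apply Real.sSup_le _ (Real.rpow_nonneg hB0 _)
    rintro v ⟨γ, hγ0, hγle, rfl⟩
    have hint0 : 0 ≤ ∫ t in (0:ℝ)..(1-γ), |f (t + γ) - f t| ^ q := by
      apply intervalIntegral.integral_nonneg (by linarith [le_trans hγle hn1])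
      intro u _
      exact Real.rpow_nonneg (abs_nonneg _) q
    exact Real.rpow_le_rpow hint0 (hkey γ hγ0 hγle) (by positivity)
  have hlb : 0 ≤ omegaq q f (1/(n:ℝ)) := by
    unfold omegaq
    apply Real.sSup_nonneg
    rintro v ⟨γ, hγ0, hγle, rfl⟩
    apply Real.rpow_nonneg
    apply intervalIntegral.integral_nonneg (by linarith [le_trans hγle hn1])
    intro u _
    exact Real.rpow_nonneg (abs_nonneg _) q
  calc omegaq q f (1/(n:ℝ)) ^ q ≤ (B ^ (1/q)) ^ q := Real.rpow_le_rpow hlb hub hq0.le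
    _ = B := by rw [← Real.rpow_mul hB0, one_div_mul_cancel (ne_of_gt hq0), Real.rpow_one]
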